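/- Let k ≥ 3, let 1 ≤ m ≤ k−2, set n(k,m) = 2^k − 3·2^{k−m−2}, and let d denote the minimum distance of S_{n,k}. (a) If n is an integer with 2^k − 2^{k−m} ≤ n ≤ n(k,m), then d = 2^{k−1} − 2^{k−m−1}. (b) If n is an integer with n(k,m) ≤ n ≤ 2^k − 2^{k−m−1}, then n − d = 2^{k−1} − 2^{k−m−2}. -/

import Mathlib

open Finset

/-- The value of column `j` (0-indexed) of the matrix
`H_k = [H_k^(k-1) | H_k^(k-2) | … | H_k^(0)]`, read as a `k`-bit integer with
row 1 as the most significant bit.  (Column `c` of the block `H_k^(m)` is the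
vector `(0,…,0,1,binary_m(c))`, i.e. the integer `2^m + c`; the block `H_k^(m)`
occupies global columns `[2^k - 2^(m+1), 2^k - 2^m)`, so that
`m = ⌊log₂ (2^k - 1 - j)⌋` and the value is `3·2^m + j - 2^k`.) -/
def colVal (k j : ℕ) : ℕ := 3 * 2 ^ Nat.log2 (2 ^ k - 1 - j) + j - 2 ^ k

/-- Row `i` (1-indexed, `1 ≤ i ≤ k`) of the matrix `H_k(n)` consisting of the
first `n` columns of `H_k`. -/
def Hrow (k n : ℕ) (i : ℕ) : Fin n → ZMod 2 :=
  fun j => if Nat.testBit (colVal k j) (k - i) then 1 else 0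

/-- The code `S_{n,k}`: the binary linear code spanned by the rows of `H_k(n)`. -/
def SCode (k n : ℕ) : Submodule (ZMod 2) (Fin n → ZMod 2) :=
  Submodule.span (ZMod 2) (Set.range fun i : Fin k => Hrow k n ((i : ℕ) + 1))

/-- `w_i`: the Hamming weight of the `i`-th (1-indexed) row of `H_k(n)`. -/
def rowWt (k n i : ℕ) : ℕ := hammingNorm (Hrow k n i)

/-- `α_i`: the `i`-th entry (1-indexed) of the last (`n`-th) column of `H_k(n)`;
`true` encodes `1` and `false` encodes `0`. -/
def alphaBit (k n i : ℕ) : Bool := Nat.testBit (colVal k (n - 1)) (k - i)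

/-- Row `i` (1-indexed) of the matrix `M_{n,k}`, whose `j`-th column
(0-indexed) is the `k`-bit binary representation of `2^k - 1 - j`, MSB first. -/
def Mrow (k n : ℕ) (i : ℕ) : Fin n → ZMod 2 :=
  fun j => if Nat.testBit (2 ^ k - 1 - (j : ℕ)) (k - i) then 1 else 0

/-- The code `D_{n,k}`: the binary linear code spanned by the rows of `M_{n,k}`. -/
def DCode (k n : ℕ) : Submodule (ZMod 2) (Fin n → ZMod 2) :=
  Submodule.span (ZMod 2) (Set.range fun i : Fin k => Mrow k n ((i : ℕ) + 1))

/-- The value of column `j` (0-indexed) of the generalized matrix consisting of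
`t-1` copies of `H_k^(k-1)` followed by `H_k(n')`, where `n = 2^(k-1)·(t-1) + n'`
with `2^(k-1) ≤ n' ≤ 2^k - 1` (so `t - 1 = (n - 2^(k-1)) / 2^(k-1)`). -/
def gcolVal (k n j : ℕ) : ℕ :=
  if j < (n - 2 ^ (k - 1)) / 2 ^ (k - 1) * 2 ^ (k - 1) then
    2 ^ (k - 1) + j % 2 ^ (k - 1)
  else colVal k (j - (n - 2 ^ (k - 1)) / 2 ^ (k - 1) * 2 ^ (k - 1))

/-- The generalized code `S_{n,k}`, defined for every `n ≥ 2^(k-1)`: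
the span of the rows of the `k × n` matrix obtained by concatenating `t-1`
copies of `H_k^(k-1)` followed by `H_k(n')`. -/
def GSCode (k n : ℕ) : Submodule (ZMod 2) (Fin n → ZMod 2) :=
  Submodule.span (ZMod 2)
    (Set.range fun i : Fin k => fun j : Fin n =>
      if Nat.testBit (gcolVal k n (j : ℕ)) (k - ((i : ℕ) + 1)) then (1 : ZMod 2) else 0)

/-- The minimum distance of a binary linear code: the least Hamming weight of a
nonzero codeword. -/
noncomputable def minDist {n : ℕ} (C : Submodule (ZMod 2) (Fin n → ZMod 2)) : ℕ :=
  sInf {w | ∃ c ∈ C, c ≠ 0 ∧ hammingNorm c = w}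

/-- `A_w`: the number of codewords of `C` of Hamming weight `w`. -/
noncomputable def numWt {n : ℕ} (C : Submodule (ZMod 2) (Fin n → ZMod 2)) (w : ℕ) : ℕ :=
  Set.ncard {c : Fin n → ZMod 2 | c ∈ C ∧ hammingNorm c = w}

/-- The undetected error probability
`P_ue(C,p) = Σ_{w=1}^n A_w p^w (1-p)^(n-w)`. -/
noncomputable def Pue {n : ℕ} (C : Submodule (ZMod 2) (Fin n → ZMod 2)) (p : ℝ) : ℝ :=
  ∑ w ∈ Finset.Icc 1 n, (numWt C w : ℝ) * p ^ w * (1 - p) ^ (n - w)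

/-- A code is proper if `p ↦ P_ue(C,p)` is monotonically increasing on `[0, 1/2]`. -/
def IsProper {n : ℕ} (C : Submodule (ZMod 2) (Fin n → ZMod 2)) : Prop :=
  MonotoneOn (Pue C) (Set.Icc (0 : ℝ) (1 / 2))

/-- An `[n,k]` code is satisfactory if `P_ue(C,p) ≤ 2^(k-n)` for all `p ∈ [0,1/2]`. -/
def IsSatisfactory (k : ℕ) {n : ℕ} (C : Submodule (ZMod 2) (Fin n → ZMod 2)) : Prop :=
  ∀ p ∈ Set.Icc (0 : ℝ) (1 / 2), Pue C p ≤ (2 : ℝ) ^ ((k : ℤ) - (n : ℤ))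

/-- The binary entropy function `h(x) = -x log₂ x - (1-x) log₂ (1-x)`. -/
noncomputable def binEnt (x : ℝ) : ℝ :=
  -(x * Real.logb 2 x) - (1 - x) * Real.logb 2 (1 - x)

/-- `U_m = (2^(m+2) - 3)·(1 - h((2^(m+1) - 2)/(2^(m+2) - 3)))`. -/
noncomputable def Ufun (m : ℕ) : ℝ :=
  ((2 : ℝ) ^ (m + 2) - 3) * (1 - binEnt (((2 : ℝ) ^ (m + 1) - 2) / ((2 : ℝ) ^ (m + 2) - 3)))

/-! ### Auxiliary development for Statement 5 -/

namespace Stmt5Aux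

lemma zmod2_ne_zero_iff : ∀ x : ZMod 2, x ≠ 0 ↔ x = 1 := by decide

lemma zmod2_add_self : ∀ x : ZMod 2, x + x = 0 := by decide

/-- The `b`-th bit of `v` as an element of `ZMod 2`. -/
def bitv (v b : ℕ) : ZMod 2 := if v.testBit b then 1 else 0

/-- The value at column-value `v` of the codeword with coefficient bits `g`. -/
def Fv (k : ℕ) (g : ℕ → ZMod 2) (v : ℕ) : ZMod 2 :=
  ∑ b ∈ Finset.range k, g b * bitv v b

/-- The number of column-values in `s` where the codeword has a `1`. -/
def cnt (k : ℕ) (g : ℕ → ZMod 2) (s : Finset ℕ) : ℕ :=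
  (s.filter (fun v => Fv k g v = 1)).card

lemma Fv_zero {k t : ℕ} {g : ℕ → ZMod 2} (hg : ∀ b < t, g b = 0)
    {v : ℕ} (hv : v < 2 ^ t) : Fv k g v = 0 := by
  refine Finset.sum_eq_zero fun b _ => ?_
  by_cases hbt : b < t
  · rw [hg b hbt, zero_mul]
  · have : v < 2 ^ b := lt_of_lt_of_le hv (Nat.pow_le_pow_right (by norm_num) (not_lt.mp hbt))
    simp [bitv, Nat.testBit_lt_two_pow this]

lemma Fv_xor_add {k b₀ : ℕ} (g : ℕ → ZMod 2) (hb₀ : b₀ < k) (v : ℕ) :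
    Fv k g (v ^^^ 2 ^ b₀) + Fv k g v = g b₀ := by
  unfold Fv
  rw [← Finset.sum_add_distrib]
  rw [Finset.sum_eq_single b₀]
  · have hbit : (v ^^^ 2 ^ b₀).testBit b₀ = !v.testBit b₀ := by
      rw [Nat.testBit_xor, Nat.testBit_two_pow]
      simp
    unfold bitv
    rw [hbit]
    cases hvb : v.testBit b₀ <;> simp
  · intro b _ hbne
    have hbit : (v ^^^ 2 ^ b₀).testBit b = v.testBit b := by
      rw [Nat.testBit_xor, Nat.testBit_two_pow]
      simp [Ne.symm hbne]
    unfold bitv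
    rw [hbit]
    exact zmod2_add_self _
  · intro h; exact absurd (Finset.mem_range.mpr hb₀) h

lemma Fv_xor {k b₀ : ℕ} (g : ℕ → ZMod 2) (hb₀ : b₀ < k) (v : ℕ) :
    Fv k g (v ^^^ 2 ^ b₀) = Fv k g v + g b₀ := by
  have h := Fv_xor_add g hb₀ v
  rw [← h, add_comm (Fv k g (v ^^^ 2 ^ b₀)) (Fv k g v), ← add_assoc,
    zmod2_add_self, zero_add]

lemma Fv_single {k b₀ : ℕ} (hb₀ : b₀ < k) (v : ℕ) :
    Fv k (fun b => if b = b₀ then 1 else 0) v = bitv v b₀ := by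
  unfold Fv
  rw [Finset.sum_eq_single b₀]
  · simp
  · intro b _ hbne; simp [hbne]
  · intro h; exact absurd (Finset.mem_range.mpr hb₀) h

lemma zmod2_cases : ∀ x : ZMod 2, x = 0 ∨ x = 1 := by decide

lemma cnt_range {k t : ℕ} {g : ℕ → ZMod 2} {b₀ : ℕ} (hb₀t : b₀ < t) (htk : t ≤ k)
    (hg : g b₀ = 1) : cnt k g (Finset.range (2 ^ t)) = 2 ^ (t - 1) := by
  have hxor : ∀ v < 2 ^ t, v ^^^ 2 ^ b₀ < 2 ^ t := fun v hv =>
    Nat.xor_lt_two_pow hv (Nat.pow_lt_pow_right (by norm_num) hb₀t)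
  have hFv : ∀ v : ℕ, Fv k g (v ^^^ 2 ^ b₀) = Fv k g v + 1 := by
    intro v; rw [Fv_xor g (lt_of_lt_of_le hb₀t htk) v, hg]
  have hkey : ((Finset.range (2 ^ t)).filter (fun v => Fv k g v = 1)).card =
      ((Finset.range (2 ^ t)).filter (fun v => ¬ Fv k g v = 1)).card := by
    apply Finset.card_bij (fun v _ => v ^^^ 2 ^ b₀)
    · intro v hv
      rw [Finset.mem_filter, Finset.mem_range] at hv
      rw [Finset.mem_filter, Finset.mem_range]
      refine ⟨hxor v hv.1, ?_⟩
      rw [hFv v, hv.2]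
      decide
    · intro v₁ _ v₂ _ heq
      have := congrArg (fun x => x ^^^ 2 ^ b₀) heq
      simpa [Nat.xor_assoc] using this
    · intro v hv
      rw [Finset.mem_filter, Finset.mem_range] at hv
      refine ⟨v ^^^ 2 ^ b₀, ?_, by simp [Nat.xor_assoc]⟩
      rw [Finset.mem_filter, Finset.mem_range]
      refine ⟨hxor v hv.1, ?_⟩
      rw [hFv v]
      rcases zmod2_cases (Fv k g v) with h | h
      · rw [h]; decide
      · exact absurd h hv.2
  have hsum := Finset.card_filter_add_card_filter_not
    (s := Finset.range (2 ^ t)) (fun v => Fv k g v = 1)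
  rw [Finset.card_range] at hsum
  have ht2 : (2 : ℕ) ^ t = 2 * 2 ^ (t - 1) := by
    rw [← pow_succ']; congr 1; omega
  unfold cnt
  omega

lemma cnt_zero {k t : ℕ} {g : ℕ → ZMod 2} (hg : ∀ b < t, g b = 0)
    {s : Finset ℕ} (hs : ∀ v ∈ s, v < 2 ^ t) : cnt k g s = 0 := by
  unfold cnt
  rw [Finset.card_eq_zero, Finset.filter_eq_empty_iff]
  intro v hv h1
  rw [Fv_zero hg (hs v hv)] at h1
  exact (by decide : (0 : ZMod 2) ≠ 1) h1

lemma cnt_split {k A B : ℕ} (g : ℕ → ZMod 2) (hAB : A ≤ B) :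
    cnt k g (Finset.range B) = cnt k g (Finset.range A) + cnt k g (Finset.Ico A B) := by
  unfold cnt
  rw [Finset.range_eq_Ico,
    ← Finset.Ico_union_Ico_eq_Ico (Nat.zero_le A) hAB, Finset.filter_union,
    Finset.card_union_of_disjoint, Finset.range_eq_Ico]
  exact Finset.disjoint_filter_filter (p := fun v => Fv k g v = 1) (q := fun v => Fv k g v = 1)
    (Finset.Ico_disjoint_Ico_consecutive 0 A B)

lemma cnt_le_of_subset {k : ℕ} (g : ℕ → ZMod 2) {s u : Finset ℕ} (h : s ⊆ u) :
    cnt k g s ≤ cnt k g u :=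
  Finset.card_le_card (Finset.filter_subset_filter _ h)

/-! ### Structure of the columns of `H_k(n)` -/

lemma log2_eq {m u : ℕ} (h1 : 2 ^ m ≤ u) (h2 : u < 2 ^ (m + 1)) : Nat.log2 u = m := by
  rw [Nat.log2_eq_log_two]; exact Nat.log_eq_of_pow_le_of_lt_pow h1 h2

lemma colVal_eq {k m c : ℕ} (hm : m < k) (hc : c < 2 ^ m) :
    colVal k (2 ^ k - 2 ^ (m + 1) + c) = 2 ^ m + c := by
  have h1 : (2 : ℕ) ^ (m + 1) ≤ 2 ^ k := Nat.pow_le_pow_right (by norm_num) hm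
  have h2 : (2 : ℕ) ^ (m + 1) = 2 * 2 ^ m := by ring
  unfold colVal
  have hu : 2 ^ k - 1 - (2 ^ k - 2 ^ (m + 1) + c) = 2 ^ (m + 1) - 1 - c := by omega
  rw [hu, log2_eq (m := m) (by omega) (by omega)]
  omega

lemma block_decomp {k j : ℕ} (hj : j < 2 ^ k - 1) :
    ∃ m c, m < k ∧ c < 2 ^ m ∧ j = 2 ^ k - 2 ^ (m + 1) + c := by
  have hk1 : (1 : ℕ) ≤ 2 ^ k := Nat.one_le_two_pow
  set u := 2 ^ k - 1 - j with hu
  have hu1 : 1 ≤ u := by omega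
  have hu2 : u < 2 ^ k := by omega
  set m := Nat.log2 u with hm
  have hml : 2 ^ m ≤ u := by
    rw [hm, Nat.log2_eq_log_two]; exact Nat.pow_log_le_self 2 (by omega)
  have hmu : u < 2 ^ (m + 1) := by
    rw [hm, Nat.log2_eq_log_two]; exact Nat.lt_pow_succ_log_self (by norm_num) u
  have hmk : m < k := by
    by_contra h
    have := Nat.pow_le_pow_right (n := 2) (by norm_num) (not_lt.mp h)
    omega
  have h2 : (2 : ℕ) ^ (m + 1) = 2 * 2 ^ m := by ring
  have hpk : (2 : ℕ) ^ (m + 1) ≤ 2 ^ k := Nat.pow_le_pow_right (by norm_num) hmk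
  exact ⟨m, 2 ^ (m + 1) - 1 - u, hmk, by omega, by omega⟩

lemma block_unique {m c m' c' : ℕ} (hc : c < 2 ^ m) (hc' : c' < 2 ^ m')
    (h : 2 ^ m + c = 2 ^ m' + c') : m = m' ∧ c = c' := by
  rcases lt_trichotomy m m' with h1 | h1 | h1
  · have h2 : (2 : ℕ) ^ (m + 1) ≤ 2 ^ m' := Nat.pow_le_pow_right (by norm_num) h1
    have h3 : (2 : ℕ) ^ (m + 1) = 2 * 2 ^ m := by ring
    omega
  · subst h1; omega
  · have h2 : (2 : ℕ) ^ (m' + 1) ≤ 2 ^ m := Nat.pow_le_pow_right (by norm_num) h1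
    have h3 : (2 : ℕ) ^ (m' + 1) = 2 * 2 ^ m' := by ring
    omega

/-- The main change-of-variables: counting columns `j < n` satisfying `P (colVal k j)`
equals counting values in `Ico (2^(t+1)) (2^k) ∪ Ico (2^t) (2^t + r)` satisfying `P`. -/
lemma card_range_filter {k t r : ℕ} (ht1 : 1 ≤ t) (htk : t + 2 ≤ k) (hr : r ≤ 2 ^ t)
    (P : ℕ → Prop) [DecidablePred P] :
    ((Finset.range (2 ^ k - 2 ^ (t + 1) + r)).filter (fun j => P (colVal k j))).card
      = ((Finset.Ico (2 ^ (t + 1)) (2 ^ k) ∪ Finset.Ico (2 ^ t) (2 ^ t + r)).filter P).card := by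
  have h2t : (2 : ℕ) ^ (t + 1) = 2 * 2 ^ t := by ring
  have h2t1 : (2 : ℕ) ^ t = 2 * 2 ^ (t - 1) := by
    rw [← pow_succ']; congr 1; omega
  have hA : (2 : ℕ) ^ (t + 1) ≤ 2 ^ k := Nat.pow_le_pow_right (by norm_num) (by omega)
  have hB : (2 : ℕ) ≤ 2 ^ t := by
    calc (2 : ℕ) = 2 ^ 1 := rfl
    _ ≤ 2 ^ t := Nat.pow_le_pow_right (by norm_num) ht1
  set n := 2 ^ k - 2 ^ (t + 1) + r with hn
  have hn1 : n < 2 ^ k - 1 := by omega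
  apply Finset.card_bij (fun j _ => colVal k j)
  · intro j hj
    rw [Finset.mem_filter, Finset.mem_range] at hj
    obtain ⟨m', c, hm'k, hc, hjeq⟩ := block_decomp (lt_trans hj.1 hn1)
    have hcv : colVal k j = 2 ^ m' + c := by rw [hjeq]; exact colVal_eq hm'k hc
    rw [Finset.mem_filter]
    refine ⟨?_, hj.2⟩
    rw [Finset.mem_union, Finset.mem_Ico, Finset.mem_Ico]
    have hp1 : (2 : ℕ) ^ (m' + 1) ≤ 2 ^ k := Nat.pow_le_pow_right (by norm_num) hm'k
    have hp2 : (2 : ℕ) ^ (m' + 1) = 2 * 2 ^ m' := by ring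
    rcases lt_trichotomy m' t with hmt | hmt | hmt
    · -- impossible: j would be ≥ n
      exfalso
      have : (2 : ℕ) ^ (m' + 1) ≤ 2 ^ t := Nat.pow_le_pow_right (by norm_num) hmt
      have hjn := hj.1
      omega
    · -- partial block
      subst hmt
      right
      have hjn := hj.1
      rw [hcv]
      omega
    · -- full block
      left
      have : (2 : ℕ) ^ (t + 1) ≤ 2 ^ m' := Nat.pow_le_pow_right (by norm_num) hmt
      rw [hcv]
      omega
  · intro j₁ hj₁ j₂ hj₂ heq
    rw [Finset.mem_filter, Finset.mem_range] at hj₁ hj₂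
    obtain ⟨m₁, c₁, hm₁, hc₁, he₁⟩ := block_decomp (lt_trans hj₁.1 hn1)
    obtain ⟨m₂, c₂, hm₂, hc₂, he₂⟩ := block_decomp (lt_trans hj₂.1 hn1)
    rw [he₁, he₂, colVal_eq hm₁ hc₁, colVal_eq hm₂ hc₂] at heq
    obtain ⟨hmm, hcc⟩ := block_unique hc₁ hc₂ heq
    rw [he₁, he₂, hmm, hcc]
  · intro v hv
    rw [Finset.mem_filter, Finset.mem_union, Finset.mem_Ico, Finset.mem_Ico] at hv
    obtain ⟨hmem, hP⟩ := hv
    rcases hmem with ⟨hv1, hv2⟩ | ⟨hv1, hv2⟩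
    · -- full block part
      have hv0 : v ≠ 0 := by omega
      set m' := Nat.log2 v with hm'
      have hml : 2 ^ m' ≤ v := by
        rw [hm', Nat.log2_eq_log_two]; exact Nat.pow_log_le_self 2 hv0
      have hmu : v < 2 ^ (m' + 1) := by
        rw [hm', Nat.log2_eq_log_two]; exact Nat.lt_pow_succ_log_self (by norm_num) v
      have hm'k : m' < k := by
        by_contra h
        have := Nat.pow_le_pow_right (n := 2) (by norm_num) (not_lt.mp h)
        omega
      have htm' : t + 1 ≤ m' := by
        by_contra h
        have : (2 : ℕ) ^ (m' + 1) ≤ 2 ^ (t + 1) :=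
          Nat.pow_le_pow_right (by norm_num) (by omega)
        omega
      have hp2 : (2 : ℕ) ^ (m' + 1) = 2 * 2 ^ m' := by ring
      have hp3 : (2 : ℕ) ^ (t + 1) ≤ 2 ^ m' := Nat.pow_le_pow_right (by norm_num) htm'
      refine ⟨2 ^ k - 2 ^ (m' + 1) + (v - 2 ^ m'), ?_, ?_⟩
      · rw [Finset.mem_filter, Finset.mem_range]
        constructor
        · omega
        · rw [colVal_eq hm'k (by omega)]
          have : 2 ^ m' + (v - 2 ^ m') = v := by omega
          rw [this]; exact hP
      · rw [colVal_eq hm'k (by omega)]; omega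
    · -- partial block part
      refine ⟨2 ^ k - 2 ^ (t + 1) + (v - 2 ^ t), ?_, ?_⟩
      · rw [Finset.mem_filter, Finset.mem_range]
        constructor
        · omega
        · rw [colVal_eq (by omega) (by omega)]
          have : 2 ^ t + (v - 2 ^ t) = v := by omega
          rw [this]; exact hP
      · rw [colVal_eq (by omega) (by omega)]; omega

/-! ### Weight bounds -/

lemma disjoint_parts {k t r : ℕ} (hr : r ≤ 2 ^ t) :
    Disjoint (Finset.Ico (2 ^ (t + 1)) (2 ^ k)) (Finset.Ico (2 ^ t) (2 ^ t + r)) := by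
  have h2t : (2 : ℕ) ^ (t + 1) = 2 * 2 ^ t := by ring
  rw [Finset.disjoint_left]
  intro v hv1 hv2
  rw [Finset.mem_Ico] at hv1 hv2
  omega

lemma cnt_union_eq {k t r : ℕ} (hr : r ≤ 2 ^ t) (g : ℕ → ZMod 2) :
    cnt k g (Finset.Ico (2 ^ (t + 1)) (2 ^ k) ∪ Finset.Ico (2 ^ t) (2 ^ t + r))
      = cnt k g (Finset.Ico (2 ^ (t + 1)) (2 ^ k)) + cnt k g (Finset.Ico (2 ^ t) (2 ^ t + r)) := by
  unfold cnt
  rw [Finset.filter_union, Finset.card_union_of_disjoint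
    (Finset.disjoint_filter_filter (disjoint_parts hr))]

/-- In the half-open block `[2^t, 2^t + r)` with `r ≤ 2^t`, if `g` vanishes below `t`
and `g t = 1`, every value gives a `1`. -/
lemma cnt_low_full {k t r : ℕ} (htk : t + 1 ≤ k) (hr : r ≤ 2 ^ t) {g : ℕ → ZMod 2}
    (hlow : ∀ b < t, g b = 0) (hgt : g t = 1) :
    cnt k g (Finset.Ico (2 ^ t) (2 ^ t + r)) = r := by
  have h2t : (2 : ℕ) ^ (t + 1) = 2 * 2 ^ t := by ring
  unfold cnt
  have : (Finset.Ico (2 ^ t) (2 ^ t + r)).filter (fun v => Fv k g v = 1)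
      = Finset.Ico (2 ^ t) (2 ^ t + r) := by
    rw [Finset.filter_eq_self]
    intro v hv
    rw [Finset.mem_Ico] at hv
    unfold Fv
    rw [Finset.sum_eq_single t]
    · have hbit : v.testBit t = true := by
        rw [Nat.testBit_eq_decide_div_mod_eq]
        have : v / 2 ^ t = 1 := Nat.div_eq_of_lt_le (by omega) (by omega)
        simp [this]
      rw [hgt]; unfold bitv; rw [hbit]; simp
    · intro b _ hbne
      rcases lt_or_gt_of_ne hbne with hb | hb
      · rw [hlow b hb, zero_mul]
      · have : v < 2 ^ b := by
          have : (2 : ℕ) ^ (t + 1) ≤ 2 ^ b := Nat.pow_le_pow_right (by norm_num) hb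
          omega
        unfold bitv
        rw [Nat.testBit_lt_two_pow this]
        simp
    · intro h; exact absurd (Finset.mem_range.mpr (by omega)) h
  rw [this, Nat.card_Ico]
  omega

/-- Lower bound for the weight of any nonzero codeword. -/
lemma cnt_union_lower {k t r : ℕ} (ht1 : 1 ≤ t) (htk : t + 2 ≤ k) (hr : r ≤ 2 ^ t)
    (g : ℕ → ZMod 2) (hg : ∃ b, b < k ∧ g b ≠ 0) :
    2 ^ (k - 1) - 2 ^ t + (r - 2 ^ (t - 1))
      ≤ cnt k g (Finset.Ico (2 ^ (t + 1)) (2 ^ k) ∪ Finset.Ico (2 ^ t) (2 ^ t + r)) := by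
  obtain ⟨b₀, hb₀k, hb₀⟩ := hg
  rw [zmod2_ne_zero_iff] at hb₀
  have h2t : (2 : ℕ) ^ (t + 1) = 2 * 2 ^ t := by ring
  have h2t1 : (2 : ℕ) ^ t = 2 * 2 ^ (t - 1) := by rw [← pow_succ']; congr 1; omega
  have h2k : (2 : ℕ) ^ k = 2 * 2 ^ (k - 1) := by rw [← pow_succ']; congr 1; omega
  have hp1 : (2 : ℕ) ^ (t + 1) ≤ 2 ^ (k - 1) := Nat.pow_le_pow_right (by norm_num) (by omega)
  have split1 := cnt_split (k := k) (A := 2 ^ (t + 1)) (B := 2 ^ k) g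
    (Nat.pow_le_pow_right (by norm_num) (by omega))
  have split2 := cnt_split (k := k) (A := 2 ^ t) (B := 2 ^ (t + 1)) g
    (Nat.pow_le_pow_right (by norm_num) (by omega))
  have hfull : cnt k g (Finset.range (2 ^ k)) = 2 ^ (k - 1) := cnt_range hb₀k le_rfl hb₀
  rw [cnt_union_eq hr]
  by_cases hlow : ∃ b, b < t ∧ g b ≠ 0
  · -- case B1 : some coefficient strictly below `t`
    obtain ⟨b₁, hb₁t, hb₁⟩ := hlow
    rw [zmod2_ne_zero_iff] at hb₁
    have c1 : cnt k g (Finset.range (2 ^ t)) = 2 ^ (t - 1) :=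
      cnt_range hb₁t (by omega) hb₁
    have c2 : cnt k g (Finset.range (2 ^ (t + 1))) = 2 ^ t := by
      rw [cnt_range (b₀ := b₁) (by omega) (by omega) hb₁]
      congr 1
    set z1 := ((Finset.Ico (2 ^ t) (2 ^ t + r)).filter (fun v => ¬ Fv k g v = 1)).card with hz1
    set z2 := ((Finset.Ico (2 ^ t) (2 ^ (t + 1))).filter (fun v => ¬ Fv k g v = 1)).card with hz2
    have e1 : cnt k g (Finset.Ico (2 ^ t) (2 ^ t + r)) + z1 = r := by
      unfold cnt
      rw [hz1]
      have := Finset.card_filter_add_card_filter_not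
        (s := Finset.Ico (2 ^ t) (2 ^ t + r)) (fun v => Fv k g v = 1)
      rw [Nat.card_Ico] at this
      omega
    have e2 : cnt k g (Finset.Ico (2 ^ t) (2 ^ (t + 1))) + z2 = 2 ^ t := by
      unfold cnt
      rw [hz2]
      have := Finset.card_filter_add_card_filter_not
        (s := Finset.Ico (2 ^ t) (2 ^ (t + 1))) (fun v => Fv k g v = 1)
      rw [Nat.card_Ico] at this
      omega
    have e3 : z1 ≤ z2 := by
      rw [hz1, hz2]
      exact Finset.card_le_card (Finset.filter_subset_filter _
        (Finset.Ico_subset_Ico le_rfl (by omega)))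
    omega
  · push_neg at hlow
    by_cases hgt : g t = 1
    · -- case B2 : lowest coefficient exactly at `t`
      have clow : cnt k g (Finset.Ico (2 ^ t) (2 ^ t + r)) = r :=
        cnt_low_full (by omega) hr hlow hgt
      have c2 : cnt k g (Finset.range (2 ^ (t + 1))) = 2 ^ t := by
        rw [cnt_range (b₀ := t) (by omega) (by omega) hgt]
        congr 1
      omega
    · -- case A : all coefficients above `t`
      have hlow'' : ∀ b < t + 1, g b = 0 := by
        intro b hb
        rcases Nat.lt_or_ge b t with h | h
        · exact hlow b h
        · have hbt : b = t := by omega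
          subst hbt
          rcases zmod2_cases (g b) with h' | h'
          · exact h'
          · exact absurd h' hgt
      have c2 : cnt k g (Finset.range (2 ^ (t + 1))) = 0 :=
        cnt_zero hlow'' (fun v hv => Finset.mem_range.mp hv)
      omega

/-- Exact weight of the witness codeword, coming from `g = δ_{t-1}`. -/
lemma cnt_union_witness {k t r : ℕ} (ht1 : 1 ≤ t) (htk : t + 2 ≤ k) (hr : r ≤ 2 ^ t) :
    cnt k (fun b => if b = t - 1 then 1 else 0)
        (Finset.Ico (2 ^ (t + 1)) (2 ^ k) ∪ Finset.Ico (2 ^ t) (2 ^ t + r))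
      = 2 ^ (k - 1) - 2 ^ t + (r - 2 ^ (t - 1)) := by
  set g : ℕ → ZMod 2 := fun b => if b = t - 1 then 1 else 0 with hgdef
  have hgval : g (t - 1) = 1 := by rw [hgdef]; simp
  have h2t : (2 : ℕ) ^ (t + 1) = 2 * 2 ^ t := by ring
  have h2t1 : (2 : ℕ) ^ t = 2 * 2 ^ (t - 1) := by rw [← pow_succ']; congr 1; omega
  have h2k : (2 : ℕ) ^ k = 2 * 2 ^ (k - 1) := by rw [← pow_succ']; congr 1; omega
  have hp1 : (2 : ℕ) ^ (t + 1) ≤ 2 ^ (k - 1) := Nat.pow_le_pow_right (by norm_num) (by omega)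
  have split1 := cnt_split (k := k) (A := 2 ^ (t + 1)) (B := 2 ^ k) g
    (Nat.pow_le_pow_right (by norm_num) (by omega))
  have hfull : cnt k g (Finset.range (2 ^ k)) = 2 ^ (k - 1) :=
    cnt_range (by omega) le_rfl hgval
  have c2 : cnt k g (Finset.range (2 ^ (t + 1))) = 2 ^ t := by
    rw [cnt_range (b₀ := t - 1) (by omega) (by omega) hgval]
    congr 1
  have clow : cnt k g (Finset.Ico (2 ^ t) (2 ^ t + r)) = r - 2 ^ (t - 1) := by
    unfold cnt
    have hset : (Finset.Ico (2 ^ t) (2 ^ t + r)).filter (fun v => Fv k g v = 1)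
        = Finset.Ico (2 ^ t + 2 ^ (t - 1)) (2 ^ t + r) := by
      ext v
      rw [Finset.mem_filter, Finset.mem_Ico, Finset.mem_Ico]
      have hFv : ∀ hv1 : 2 ^ t ≤ v, v < 2 ^ t + r → (Fv k g v = 1 ↔ 2 ^ t + 2 ^ (t - 1) ≤ v) := by
        intro hv1 hv2
        rw [hgdef, Fv_single (by omega) v]
        unfold bitv
        rw [Nat.testBit_eq_decide_div_mod_eq]
        by_cases hge : 2 ^ t + 2 ^ (t - 1) ≤ v
        · have : v / 2 ^ (t - 1) = 3 := Nat.div_eq_of_lt_le (by omega) (by omega)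
          simp [this, hge]
        · have : v / 2 ^ (t - 1) = 2 := Nat.div_eq_of_lt_le (by omega) (by omega)
          simp [this, hge]
      constructor
      · rintro ⟨⟨hv1, hv2⟩, hFv1⟩
        exact ⟨(hFv hv1 hv2).mp hFv1, hv2⟩
      · rintro ⟨hv1, hv2⟩
        have hv1' : 2 ^ t ≤ v := by omega
        exact ⟨⟨hv1', hv2⟩, (hFv hv1' hv2).mpr (by omega)⟩
    rw [hset, Nat.card_Ico]
    omega
  rw [cnt_union_eq hr, clow]
  omega

/-! ### From codewords to coefficient functions -/

lemma codeword_repr {k n : ℕ} (hk : 1 ≤ k) (c : Fin n → ZMod 2) (hc : c ∈ SCode k n) :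
    ∃ g : ℕ → ZMod 2, (∀ j : Fin n, c j = Fv k g (colVal k (j : ℕ))) ∧
      (c ≠ 0 → ∃ b, b < k ∧ g b ≠ 0) := by
  rw [SCode, Submodule.mem_span_range_iff_exists_fun] at hc
  obtain ⟨f, hf⟩ := hc
  refine ⟨fun b => if h : b < k then f ⟨k - 1 - b, by omega⟩ else 0, ?_, ?_⟩
  · intro j
    rw [← hf, Finset.sum_apply]
    unfold Fv
    apply Finset.sum_nbij' (fun i : Fin k => k - 1 - (i : ℕ))
      (fun b => (⟨k - 1 - b, by omega⟩ : Fin k))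
    · intro a _; exact Finset.mem_range.mpr (by omega)
    · intro a _; exact Finset.mem_univ _
    · intro a _
      apply Fin.ext
      simp only []
      omega
    · intro a ha
      rw [Finset.mem_range] at ha
      simp only []
      omega
    · intro a _
      have hlt := a.isLt
      have hb : k - 1 - (a : ℕ) < k := by omega
      have h2 : (⟨k - 1 - (k - 1 - (a : ℕ)), by omega⟩ : Fin k) = a :=
        Fin.ext (show k - 1 - (k - 1 - (a : ℕ)) = (a : ℕ) by omega)
      have h3 : k - ((a : ℕ) + 1) = k - 1 - (a : ℕ) := by omega
      simp only [Pi.smul_apply, smul_eq_mul, dif_pos hb, Hrow, bitv, h3]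
      congr 1
      exact (congrArg f h2).symm
  · intro hne
    by_contra h
    push_neg at h
    apply hne
    funext j
    rw [← hf, Finset.sum_apply]
    apply Finset.sum_eq_zero
    intro i _
    have : f i = 0 := by
      have hlt := i.isLt
      have h2 := h (k - 1 - (i : ℕ)) (by omega)
      simp only [dif_pos (show k - 1 - (i : ℕ) < k by omega)] at h2
      have h3 : (⟨k - 1 - (k - 1 - (i : ℕ)), by omega⟩ : Fin k) = i :=
        Fin.ext (show k - 1 - (k - 1 - (i : ℕ)) = (i : ℕ) by omega)
      rwa [h3] at h2
    rw [this, zero_smul]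
    rfl

lemma norm_cnt {k n : ℕ} (g : ℕ → ZMod 2) (c : Fin n → ZMod 2)
    (h : ∀ j : Fin n, c j = Fv k g (colVal k (j : ℕ))) :
    hammingNorm c = ((Finset.range n).filter (fun j => Fv k g (colVal k j) = 1)).card := by
  unfold hammingNorm
  apply Finset.card_bij (fun (j : Fin n) _ => (j : ℕ))
  · intro a ha
    rw [Finset.mem_filter] at ha
    rw [Finset.mem_filter, Finset.mem_range]
    refine ⟨a.isLt, ?_⟩
    rw [← h a]
    exact (zmod2_ne_zero_iff (c a)).mp ha.2
  · intro a₁ _ a₂ _ heq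
    exact Fin.ext heq
  · intro b hb
    rw [Finset.mem_filter, Finset.mem_range] at hb
    refine ⟨⟨b, hb.1⟩, ?_, rfl⟩
    rw [Finset.mem_filter]
    refine ⟨Finset.mem_univ _, ?_⟩
    rw [zmod2_ne_zero_iff, h ⟨b, hb.1⟩]
    exact hb.2

/-- The minimum distance of `S_{n,k}` for `n = 2^k - 2^(t+1) + r`, `0 ≤ r ≤ 2^t`. -/
lemma minDist_SCode {k t r : ℕ} (ht1 : 1 ≤ t) (htk : t + 2 ≤ k) (hr : r ≤ 2 ^ t) :
    minDist (SCode k (2 ^ k - 2 ^ (t + 1) + r))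
      = 2 ^ (k - 1) - 2 ^ t + (r - 2 ^ (t - 1)) := by
  have h2t : (2 : ℕ) ^ (t + 1) = 2 * 2 ^ t := by ring
  have h2t1 : (2 : ℕ) ^ t = 2 * 2 ^ (t - 1) := by rw [← pow_succ']; congr 1; omega
  have h2k : (2 : ℕ) ^ k = 2 * 2 ^ (k - 1) := by rw [← pow_succ']; congr 1; omega
  have hp1 : (2 : ℕ) ^ (t + 1) ≤ 2 ^ (k - 1) := Nat.pow_le_pow_right (by norm_num) (by omega)
  have hb1 : (1 : ℕ) ≤ 2 ^ (t - 1) := Nat.one_le_two_pow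
  set n := 2 ^ k - 2 ^ (t + 1) + r with hn
  set d := 2 ^ (k - 1) - 2 ^ t + (r - 2 ^ (t - 1)) with hd
  set g₀ : ℕ → ZMod 2 := fun b => if b = t - 1 then 1 else 0 with hg₀
  have hik : k - t < k := by omega
  set c₀ : Fin n → ZMod 2 := Hrow k n (k - t + 1) with hc₀
  have hc₀mem : c₀ ∈ SCode k n :=
    Submodule.subset_span (Set.mem_range.mpr ⟨⟨k - t, hik⟩, rfl⟩)
  have hc₀val : ∀ j : Fin n, c₀ j = Fv k g₀ (colVal k (j : ℕ)) := by
    intro j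
    rw [hc₀, hg₀, Fv_single (show t - 1 < k by omega)]
    unfold Hrow bitv
    have he : k - (k - t + 1) = t - 1 := by omega
    rw [he]
  have hnorm₀ : hammingNorm c₀ = d := by
    rw [norm_cnt g₀ c₀ hc₀val,
      card_range_filter ht1 htk hr (fun v => Fv k g₀ v = 1)]
    exact cnt_union_witness ht1 htk hr
  have hdpos : 0 < d := by rw [hd]; omega
  have hc₀ne : c₀ ≠ 0 := by
    intro h0
    rw [h0, hammingNorm_zero] at hnorm₀
    omega
  have hmem : d ∈ {w | ∃ c ∈ SCode k n, c ≠ 0 ∧ hammingNorm c = w} :=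
    ⟨c₀, hc₀mem, hc₀ne, hnorm₀⟩
  apply le_antisymm
  · exact Nat.sInf_le hmem
  · apply le_csInf ⟨d, hmem⟩
    rintro w ⟨c, hcmem, hcne, rfl⟩
    obtain ⟨g, hgval, hgne⟩ := codeword_repr (by omega) c hcmem
    rw [norm_cnt g c hgval,
      card_range_filter ht1 htk hr (fun v => Fv k g v = 1)]
    exact cnt_union_lower ht1 htk hr g (hgne hcne)

end Stmt5Aux

/-- The minimum distance of `S_{n,k}` on the two halves of the
interval `[2^k - 2^(k-m), 2^k - 2^(k-m-1)]`, with midpoint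
`n(k,m) = 2^k - 3·2^(k-m-2)`. -/
theorem stmt5 (k m : ℕ) (hk : 3 ≤ k) (hm1 : 1 ≤ m) (hm2 : m ≤ k - 2) :
    (∀ n : ℕ, 2 ^ k - 2 ^ (k - m) ≤ n → n ≤ 2 ^ k - 3 * 2 ^ (k - m - 2) →
      minDist (SCode k n) = 2 ^ (k - 1) - 2 ^ (k - m - 1)) ∧
    (∀ n : ℕ, 2 ^ k - 3 * 2 ^ (k - m - 2) ≤ n → n ≤ 2 ^ k - 2 ^ (k - m - 1) →
      n - minDist (SCode k n) = 2 ^ (k - 1) - 2 ^ (k - m - 2)) := by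
  have ht1 : 1 ≤ k - m - 1 := by omega
  have htk : (k - m - 1) + 2 ≤ k := by omega
  have e1 : (2 : ℕ) ^ ((k - m - 1) + 1) = 2 ^ (k - m) := by congr 1 <;> omega
  have e2 : (2 : ℕ) ^ (k - m - 1 - 1) = 2 ^ (k - m - 2) := by congr 1 <;> omega
  have hq1 : (2 : ℕ) ^ (k - m) = 2 * 2 ^ (k - m - 1) := by
    rw [← e1]; ring
  have hq2 : (2 : ℕ) ^ (k - m - 1) = 2 * 2 ^ (k - m - 2) := by
    rw [← e2, ← pow_succ']; congr 1; omega
  have hq3 : (2 : ℕ) ^ k = 2 * 2 ^ (k - 1) := by rw [← pow_succ']; congr 1; omega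
  have hq4 : (2 : ℕ) ^ (k - m) ≤ 2 ^ (k - 1) := Nat.pow_le_pow_right (by norm_num) (by omega)
  have hq5 : (1 : ℕ) ≤ 2 ^ (k - m - 2) := Nat.one_le_two_pow
  constructor
  · intro n h1 h2
    have hr : n - (2 ^ k - 2 ^ (k - m)) ≤ 2 ^ (k - m - 1) := by omega
    have hneq : n = 2 ^ k - 2 ^ ((k - m - 1) + 1) + (n - (2 ^ k - 2 ^ (k - m))) := by
      rw [e1]; omega
    rw [hneq, Stmt5Aux.minDist_SCode ht1 htk hr]
    omega
  · intro n h1 h2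
    have hr : n - (2 ^ k - 2 ^ (k - m)) ≤ 2 ^ (k - m - 1) := by omega
    have hneq : n = 2 ^ k - 2 ^ ((k - m - 1) + 1) + (n - (2 ^ k - 2 ^ (k - m))) := by
      rw [e1]; omega
    rw [hneq, Stmt5Aux.minDist_SCode ht1 htk hr]
    omega
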